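/- Let σ be a Hermitian d × d matrix with σ² = I, and let ρ be any d × d complex matrix. Then i(σρ − ρσ) = e^{iπσ/4} ρ e^{−iπσ/4} − e^{−iπσ/4} ρ e^{iπσ/4}; equivalently, writing G(α) := e^{−iασ/2}, one has i[σ, ρ] = G(−π/2) ρ G(−π/2)† − G(π/2) ρ G(π/2)†. -/

import Mathlib

open Matrix Complex Nat

noncomputable section

/-- The rotation gate `G(α) = e^{-iασ/2}` generated by `σ`. -/
def rotGate (d : ℕ) (σ : Matrix (Fin d) (Fin d) ℂ) (α : ℝ) :
    Matrix (Fin d) (Fin d) ℂ :=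
  NormedSpace.exp ((-(α / 2 : ℝ) * Complex.I : ℂ) • σ)

set_option maxHeartbeats 1000000 in
lemma exp_smul_of_sq (d : ℕ) (σ : Matrix (Fin d) (Fin d) ℂ) (hinv : σ * σ = 1)
    (z : ℂ) :
    NormedSpace.exp (z • σ) =
      Complex.cosh z • (1 : Matrix (Fin d) (Fin d) ℂ) + Complex.sinh z • σ := by
  have hσ2 : σ ^ 2 = 1 := by rw [sq, hinv]
  have he : HasSum (fun k : ℕ => (((2 * k)! : ℂ)⁻¹) • (z • σ) ^ (2 * k))
      (Complex.cosh z • (1 : Matrix (Fin d) (Fin d) ℂ)) := by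
    have h := (Complex.hasSum_cosh z).smul_const (1 : Matrix (Fin d) (Fin d) ℂ)
    refine h.congr_fun fun k => ?_
    rw [smul_pow, show σ ^ (2 * k) = 1 from by rw [pow_mul, hσ2, one_pow],
      smul_smul, div_eq_mul_inv, mul_comm]
  have ho : HasSum (fun k : ℕ => (((2 * k + 1)! : ℂ)⁻¹) • (z • σ) ^ (2 * k + 1))
      (Complex.sinh z • σ) := by
    have h := (Complex.hasSum_sinh z).smul_const σ
    refine h.congr_fun fun k => ?_
    rw [smul_pow, show σ ^ (2 * k + 1) = σ from by
        rw [pow_succ, pow_mul, hσ2, one_pow, one_mul],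
      smul_smul, div_eq_mul_inv, mul_comm]
  have h : HasSum (fun n : ℕ => ((n ! : ℂ)⁻¹) • (z • σ) ^ n)
      (Complex.cosh z • (1 : Matrix (Fin d) (Fin d) ℂ) + Complex.sinh z • σ) :=
    HasSum.even_add_odd he ho
  rw [NormedSpace.exp_eq_tsum ℂ]; exact h.tsum_eq

/-- For a Hermitian involution `σ` (`σ† = σ`, `σ² = I`) and any matrix
`ρ`: `i[σ,ρ] = e^{iπσ/4} ρ e^{−iπσ/4} − e^{−iπσ/4} ρ e^{iπσ/4}`, i.e. with
`G(α) = e^{−iασ/2}`, `i[σ,ρ] = G(−π/2) ρ G(−π/2)† − G(π/2) ρ G(π/2)†`. -/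
theorem stmt14 (d : ℕ) (σ ρ : Matrix (Fin d) (Fin d) ℂ)
    (hherm : σᴴ = σ) (hinv : σ * σ = 1) :
    Complex.I • (σ * ρ - ρ * σ) =
      NormedSpace.exp ((Complex.I * ((Real.pi / 4 : ℝ) : ℂ)) • σ) * ρ *
          NormedSpace.exp ((-(Complex.I * ((Real.pi / 4 : ℝ) : ℂ))) • σ) -
        NormedSpace.exp ((-(Complex.I * ((Real.pi / 4 : ℝ) : ℂ))) • σ) * ρ *
          NormedSpace.exp ((Complex.I * ((Real.pi / 4 : ℝ) : ℂ)) • σ) ∧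
    Complex.I • (σ * ρ - ρ * σ) =
      rotGate d σ (-(Real.pi / 2)) * ρ * (rotGate d σ (-(Real.pi / 2)))ᴴ -
        rotGate d σ (Real.pi / 2) * ρ * (rotGate d σ (Real.pi / 2))ᴴ := by
  set a : ℂ := (Real.cos (Real.pi / 4) : ℂ) with ha
  set b : ℂ := Complex.I * (Real.sin (Real.pi / 4) : ℂ) with hb
  set E : Matrix (Fin d) (Fin d) ℂ := a • 1 + b • σ with hE
  set F : Matrix (Fin d) (Fin d) ℂ := a • 1 - b • σ with hF
  have hr : 2 * Real.sin (Real.pi / 4) * Real.cos (Real.pi / 4) = 1 := by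
    rw [← Real.sin_two_mul]
    have h4 : 2 * (Real.pi / 4) = Real.pi / 2 := by ring
    rw [h4, Real.sin_pi_div_two]
  have hab : 2 * (a * b) = Complex.I := by
    have h1 : (2 : ℂ) * (a * b) =
        Complex.I * ((2 * Real.sin (Real.pi / 4) * Real.cos (Real.pi / 4) : ℝ) : ℂ) := by
      rw [ha, hb]; push_cast; ring
    rw [h1, hr]; norm_num
  have key : E * ρ * F - F * ρ * E = Complex.I • (σ * ρ - ρ * σ) := by
    rw [hE, hF, ← hab]
    simp only [Matrix.add_mul, Matrix.mul_add, Matrix.sub_mul, Matrix.mul_sub,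
      Matrix.smul_mul, Matrix.mul_smul, one_mul, mul_one, smul_smul, smul_sub]
    module
  have hexpI : NormedSpace.exp ((Complex.I * ((Real.pi / 4 : ℝ) : ℂ)) • σ) = E := by
    rw [exp_smul_of_sq d σ hinv, mul_comm, Complex.cosh_mul_I, Complex.sinh_mul_I,
      hE, ha, hb, Complex.ofReal_cos, Complex.ofReal_sin]
    module
  have hexpnI : NormedSpace.exp ((-(Complex.I * ((Real.pi / 4 : ℝ) : ℂ))) • σ) = F := by
    rw [exp_smul_of_sq d σ hinv, Complex.cosh_neg, Complex.sinh_neg, mul_comm,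
      Complex.cosh_mul_I, Complex.sinh_mul_I, hF, ha, hb, Complex.ofReal_cos,
      Complex.ofReal_sin]
    module
  have hca : star a = a := by rw [ha]; exact Complex.conj_ofReal _
  have hcb : star b = -b := by
    rw [hb, star_mul']
    rw [show star ((Real.sin (Real.pi / 4) : ℝ) : ℂ) = ((Real.sin (Real.pi / 4) : ℝ) : ℂ)
      from Complex.conj_ofReal _, show star Complex.I = -Complex.I from Complex.conj_I]
    ring
  have hEH : Eᴴ = F := by
    rw [hE, hF, conjTranspose_add, conjTranspose_smul, conjTranspose_smul,
      conjTranspose_one, hherm, hca, hcb, neg_smul, ← sub_eq_add_neg]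
  have hFH : Fᴴ = E := by
    rw [hE, hF, conjTranspose_sub, conjTranspose_smul, conjTranspose_smul,
      conjTranspose_one, hherm, hca, hcb, neg_smul, sub_neg_eq_add]
  have hg1 : rotGate d σ (-(Real.pi / 2)) = E := by
    rw [rotGate]
    have h : ((-(-(Real.pi / 2) / 2 : ℝ) : ℂ) * Complex.I) =
        Complex.I * ((Real.pi / 4 : ℝ) : ℂ) := by push_cast; ring
    rw [h, hexpI]
  have hg2 : rotGate d σ (Real.pi / 2) = F := by
    rw [rotGate]
    have h : ((-(Real.pi / 2 / 2 : ℝ) : ℂ) * Complex.I) =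
        -(Complex.I * ((Real.pi / 4 : ℝ) : ℂ)) := by push_cast; ring
    rw [h, hexpnI]
  constructor
  · rw [hexpI, hexpnI]; exact key.symm
  · rw [hg1, hg2, hEH, hFH]; exact key.symm

end
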